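/- If Q is an invertible matrix that is either a permutation matrix or a diagonal matrix with positive diagonal entries, then the map X ↦ QᵀXQ is a linear automorphism of the cone (FW^n_k)*; in particular it maps extreme rays to extreme rays. -/
import Mathlib


open Matrix

/-- `A` has factor width at most `k`: `A = V * Vᵀ` where every column of `V`
has at most `k` nonzero entries. -/
def HasFactorWidthLE {ι : Type*} [Fintype ι] (A : Matrix ι ι ℝ) (k : ℕ) : Prop :=
  ∃ (m : ℕ) (V : Matrix ι (Fin m) ℝ),
    A = V * Vᵀ ∧ ∀ j, {i | V i j ≠ 0}.ncard ≤ k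

/-- The cone `FW^n_k` of psd `n × n` matrices of factor width at most `k`. -/
def FW (n k : ℕ) : Set (Matrix (Fin n) (Fin n) ℝ) :=
  {A | A.PosSemidef ∧ HasFactorWidthLE A k}

/-- The principal submatrix of `A` indexed by the finite set `K`. -/
def principalSub {ι : Type*} (A : Matrix ι ι ℝ) (K : Finset ι) :
    Matrix K K ℝ :=
  A.submatrix (fun i => (i : ι)) (fun j => (j : ι))

/-- The cone `(FW^n_k)^*`: symmetric matrices all of whose `k × k` principal
submatrices are psd. -/
def FWdual (n k : ℕ) : Set (Matrix (Fin n) (Fin n) ℝ) :=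
  {A | A.IsSymm ∧ ∀ K : Finset (Fin n), K.card = k → (principalSub A K).PosSemidef}

/-- The dual cone (within symmetric matrices) with respect to the trace inner
product `⟨Y, X⟩ = trace (Y * Xᵀ)`. -/
def dualSet {n : ℕ} (C : Set (Matrix (Fin n) (Fin n) ℝ)) :
    Set (Matrix (Fin n) (Fin n) ℝ) :=
  {Y | Y.IsSymm ∧ ∀ X ∈ C, 0 ≤ (Y * Xᵀ).trace}

/-- `A` spans an extreme ray of the cone `C`. -/
def SpansExtremeRay {E : Type*} [AddCommMonoid E] [Module ℝ E]
    (C : Set E) (A : E) : Prop :=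
  A ∈ C ∧ A ≠ 0 ∧ ∀ X Y, X ∈ C → Y ∈ C → A = X + Y →
    ∃ a b : ℝ, 0 ≤ a ∧ 0 ≤ b ∧ X = a • A ∧ Y = b • A

/-- `p` is a sum of squares of `k`-nomials (polynomials with at most `k` monomials). -/
def IsSOkS {n : ℕ} (k : ℕ) (p : MvPolynomial (Fin n) ℝ) : Prop :=
  ∃ (m : ℕ) (q : Fin m → MvPolynomial (Fin n) ℝ),
    (∀ i, (q i).support.card ≤ k) ∧ p = ∑ i, (q i) ^ 2

lemma perm_entry {n : ℕ} (σ : Equiv.Perm (Fin n)) (Q X : Matrix (Fin n) (Fin n) ℝ)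
    (hσ : ∀ i j, Q i j = if σ i = j then 1 else 0) (a b : Fin n) :
    (Qᵀ * X * Q) a b = X (σ.symm a) (σ.symm b) := by
  simp only [Matrix.mul_apply, Matrix.transpose_apply, hσ]
  simp [Finset.sum_mul, ite_mul, mul_ite, Equiv.apply_eq_iff_eq_symm_apply]

lemma fwd {n k : ℕ} (Q : Matrix (Fin n) (Fin n) ℝ)
    (hQ : (∃ σ : Equiv.Perm (Fin n), ∀ i j, Q i j = if σ i = j then 1 else 0) ∨
          (∃ d : Fin n → ℝ, (∀ i, 0 < d i) ∧ Q = Matrix.diagonal d)) :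
    ∀ X ∈ FWdual n k, Qᵀ * X * Q ∈ FWdual n k := by
  rintro X ⟨hXs, hXp⟩
  constructor
  · show (Qᵀ * X * Q)ᵀ = _
    rw [Matrix.transpose_mul, Matrix.transpose_mul, Matrix.transpose_transpose, hXs.eq,
      mul_assoc]
  · intro K hK
    rcases hQ with ⟨σ, hσ⟩ | ⟨d, hd, rfl⟩
    · set K' : Finset (Fin n) := K.image σ.symm with hK'
      have hcard : K'.card = k := by
        rw [hK', Finset.card_image_of_injective _ σ.symm.injective, hK]
      have hmem : ∀ a : K, (σ.symm (a : Fin n)) ∈ K' := by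
        intro a; exact Finset.mem_image_of_mem _ a.2
      have h1 : principalSub (Qᵀ * X * Q) K =
          (principalSub X K').submatrix (fun a : K => (⟨σ.symm a, hmem a⟩ : K'))
            (fun a : K => (⟨σ.symm a, hmem a⟩ : K')) := by
        ext a b
        simp [principalSub, Matrix.submatrix_apply, perm_entry σ Q X hσ]
      rw [h1]
      exact (hXp K' hcard).submatrix _
    · have h1 : principalSub ((Matrix.diagonal d)ᵀ * X * Matrix.diagonal d) K =
          Matrix.diagonal (fun a : K => d a) * principalSub X K *
          (Matrix.diagonal (fun a : K => d a))ᴴ := by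
        ext a b
        simp [principalSub, Matrix.diagonal_transpose, Matrix.mul_apply,
          Matrix.diagonal_apply, Finset.sum_mul, ite_mul, mul_ite,
          Matrix.conjTranspose_apply]
      rw [h1]
      exact (hXp K hK).mul_mul_conjTranspose_same _

lemma inv_ex {n : ℕ} (Q : Matrix (Fin n) (Fin n) ℝ)
    (hQ : (∃ σ : Equiv.Perm (Fin n), ∀ i j, Q i j = if σ i = j then 1 else 0) ∨
          (∃ d : Fin n → ℝ, (∀ i, 0 < d i) ∧ Q = Matrix.diagonal d)) :
    ∃ Q' : Matrix (Fin n) (Fin n) ℝ,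
      ((∃ σ : Equiv.Perm (Fin n), ∀ i j, Q' i j = if σ i = j then 1 else 0) ∨
       (∃ d : Fin n → ℝ, (∀ i, 0 < d i) ∧ Q' = Matrix.diagonal d)) ∧
      Q * Q' = 1 ∧ Q' * Q = 1 := by
  rcases hQ with ⟨σ, hσ⟩ | ⟨d, hd, rfl⟩
  · refine ⟨Matrix.of fun i j => if σ.symm i = j then 1 else 0,
      Or.inl ⟨σ.symm, fun i j => rfl⟩, ?_, ?_⟩ <;>
    · ext i j
      simp [Matrix.mul_apply, hσ, Matrix.one_apply, ite_mul, mul_ite,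
        Equiv.apply_eq_iff_eq_symm_apply, Equiv.symm_apply_eq]
  · refine ⟨Matrix.diagonal (fun i => (d i)⁻¹),
      Or.inr ⟨_, fun i => inv_pos.2 (hd i), rfl⟩, ?_, ?_⟩ <;>
    · rw [Matrix.diagonal_mul_diagonal]
      convert Matrix.diagonal_one with i
      field_simp [(hd i).ne']

theorem stmt8 (n k : ℕ) (Q : Matrix (Fin n) (Fin n) ℝ)
    (hQ : (∃ σ : Equiv.Perm (Fin n), ∀ i j, Q i j = if σ i = j then 1 else 0) ∨
          (∃ d : Fin n → ℝ, (∀ i, 0 < d i) ∧ Q = Matrix.diagonal d)) :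
    (∀ X : Matrix (Fin n) (Fin n) ℝ, X ∈ FWdual n k ↔ Qᵀ * X * Q ∈ FWdual n k) ∧
    (∀ A, SpansExtremeRay (FWdual n k) A →
        SpansExtremeRay (FWdual n k) (Qᵀ * A * Q)) := by
  obtain ⟨Q', hQ', hQQ', hQ'Q⟩ := inv_ex Q hQ
  have cancel : ∀ X : Matrix (Fin n) (Fin n) ℝ, Q'ᵀ * (Qᵀ * X * Q) * Q' = X := by
    intro X
    calc Q'ᵀ * (Qᵀ * X * Q) * Q' = (Q * Q')ᵀ * X * (Q * Q') := by
          rw [Matrix.transpose_mul]; noncomm_ring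
      _ = X := by rw [hQQ']; simp
  have cancel' : ∀ X : Matrix (Fin n) (Fin n) ℝ, Qᵀ * (Q'ᵀ * X * Q') * Q = X := by
    intro X
    calc Qᵀ * (Q'ᵀ * X * Q') * Q = (Q' * Q)ᵀ * X * (Q' * Q) := by
          rw [Matrix.transpose_mul]; noncomm_ring
      _ = X := by rw [hQ'Q]; simp
  have hiff : ∀ X : Matrix (Fin n) (Fin n) ℝ, X ∈ FWdual n k ↔ Qᵀ * X * Q ∈ FWdual n k := by
    intro X
    constructor
    · exact fun h => fwd Q hQ X h
    · intro h
      have := fwd Q' hQ' _ h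
      rwa [cancel X] at this
  refine ⟨hiff, ?_⟩
  rintro A ⟨hA1, hA2, hA3⟩
  refine ⟨(hiff A).1 hA1, ?_, ?_⟩
  · intro h
    apply hA2
    have := cancel A
    rw [h] at this
    simpa using this.symm
  · intro X Y hX hY hsum
    have hX' : Q'ᵀ * X * Q' ∈ FWdual n k := fwd Q' hQ' X hX
    have hY' : Q'ᵀ * Y * Q' ∈ FWdual n k := fwd Q' hQ' Y hY
    have hAsum : A = Q'ᵀ * X * Q' + Q'ᵀ * Y * Q' := by
      have := cancel A
      rw [hsum] at this
      rw [← this, Matrix.mul_add, Matrix.add_mul]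
    obtain ⟨a, b, ha, hb, hXa, hYb⟩ := hA3 _ _ hX' hY' hAsum
    refine ⟨a, b, ha, hb, ?_, ?_⟩
    · have := cancel' X
      rw [hXa] at this
      rw [← this]
      simp [Matrix.mul_smul, Matrix.smul_mul]
    · have := cancel' Y
      rw [hYb] at this
      rw [← this]
      simp [Matrix.mul_smul, Matrix.smul_mul]
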